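/- Define ε_k := inf{ε > 0 : N(T, d, ε) ≤ 2^{2^k}} for a metric space (T, d) with finite covering numbers. Then Σ_{k=0}^∞ 2^{k/2} ε_k ≤ (√2/((√2 - 1)√(ln 2))) ∫₀^∞ √(ln N(T, d, ε)) dε. -/

import Mathlib

open Real MeasureTheory

open ENNReal

/-- The covering number `N(T, d, ε)`: the smallest cardinality of an `ε`-net of `T`
(a subset of `T` such that every point of `T` is within distance `ε` of it). -/
noncomputable def coveringNumber {X : Type*} [MetricSpace X] (T : Set X) (ε : ℝ) : ℕ∞ :=
  ⨅ (N : Finset X) (_ : ↑N ⊆ T) (_ : ∀ t ∈ T, ∃ s ∈ N, dist t s ≤ ε), (N.card : ℕ∞)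

namespace TsumEpsk

variable {X : Type*} [MetricSpace X] (T : Set X)

noncomputable def eps (k : ℕ) : ℝ :=
  sInf {ε : ℝ | 0 < ε ∧ coveringNumber T ε ≤ 2 ^ (2 ^ k)}

lemma bdd (k : ℕ) : BddBelow {ε : ℝ | 0 < ε ∧ coveringNumber T ε ≤ 2 ^ (2 ^ k)} :=
  ⟨0, fun _ hx => hx.1.le⟩

lemma eps_nonneg (k : ℕ) : 0 ≤ eps T k :=
  Real.sInf_nonneg (fun _ hx => hx.1.le)

lemma exists_R (hfin : ∀ ε : ℝ, 0 < ε → coveringNumber T ε < ⊤) :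
    ∃ R : ℝ, 0 < R ∧ coveringNumber T R ≤ 1 := by
  have h1 : ∃ F : Finset X, ↑F ⊆ T ∧ ∀ t ∈ T, ∃ s ∈ F, dist t s ≤ 1 := by
    by_contra h
    have : coveringNumber T 1 = ⊤ := by
      refine iInf_eq_top.2 fun N => ?_
      by_cases h1 : (↑N : Set X) ⊆ T
      · rw [iInf_pos h1, iInf_neg (fun hnet => h ⟨N, h1, hnet⟩)]
      · rw [iInf_neg h1]
    exact absurd this (hfin 1 one_pos).ne
  obtain ⟨F, hFT, hFnet⟩ := h1
  rcases T.eq_empty_or_nonempty with hT | ⟨t₁, ht₁⟩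
  · refine ⟨1, one_pos, ?_⟩
    have : coveringNumber T 1 ≤ ((∅ : Finset X).card : ℕ∞) := by
      refine iInf_le_of_le ∅ ?_
      rw [iInf_pos (by simp), iInf_pos (by simp [hT])]
    simpa using this.trans (by simp)
  · set R : ℝ := 1 + ∑ s ∈ F, dist s t₁ with hR
    have hRpos : 0 < R := by
      have : 0 ≤ ∑ s ∈ F, dist s t₁ := Finset.sum_nonneg fun s _ => dist_nonneg
      linarith
    refine ⟨R, hRpos, ?_⟩
    have hnet : ∀ t ∈ T, ∃ s ∈ ({t₁} : Finset X), dist t s ≤ R := by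
      intro t ht
      obtain ⟨s, hsF, hs⟩ := hFnet t ht
      refine ⟨t₁, by simp, ?_⟩
      have h2 : dist t t₁ ≤ dist t s + dist s t₁ := dist_triangle t s t₁
      have h3 : dist s t₁ ≤ ∑ s' ∈ F, dist s' t₁ :=
        Finset.single_le_sum (f := fun s' => dist s' t₁) (fun s' _ => dist_nonneg) hsF
      rw [hR]; linarith
    have : coveringNumber T R ≤ (({t₁} : Finset X).card : ℕ∞) := by
      refine iInf_le_of_le {t₁} ?_
      rw [iInf_pos (by simpa using ht₁), iInf_pos hnet]
    simpa using this

lemma set_nonempty (hfin : ∀ ε : ℝ, 0 < ε → coveringNumber T ε < ⊤) (k : ℕ) :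
    {ε : ℝ | 0 < ε ∧ coveringNumber T ε ≤ 2 ^ (2 ^ k)}.Nonempty := by
  obtain ⟨R, hR, hRle⟩ := exists_R T hfin
  exact ⟨R, hR, hRle.trans (by exact_mod_cast Nat.one_le_two_pow)⟩

lemma eps_anti (hfin : ∀ ε : ℝ, 0 < ε → coveringNumber T ε < ⊤) : Antitone (eps T) := by
  apply antitone_nat_of_succ_le
  intro k
  apply csInf_le_csInf (bdd T (k+1)) (set_nonempty T hfin k)
  intro ε hε
  refine ⟨hε.1, hε.2.trans ?_⟩
  have : (2:ℕ)^(2^k) ≤ 2^(2^(k+1)) := Nat.pow_le_pow_right (by norm_num)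
    (Nat.pow_le_pow_right (by norm_num) (by omega))
  exact_mod_cast this

lemma key (hfin : ∀ ε : ℝ, 0 < ε → coveringNumber T ε < ⊤) (k : ℕ) (ε : ℝ)
    (h0 : 0 < ε) (hlt : ε < eps T k) :
    Real.sqrt 2 ^ k * Real.sqrt (Real.log 2) ≤
      Real.sqrt (Real.log ((coveringNumber T ε).toNat)) := by
  have hgt : (2 : ℕ∞) ^ 2 ^ k < coveringNumber T ε := by
    by_contra h
    push_neg at h
    exact absurd (csInf_le (bdd T k) ⟨h0, h⟩) (not_le.2 hlt)
  have hne : coveringNumber T ε ≠ ⊤ := (hfin ε h0).ne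
  set m := (coveringNumber T ε).toNat with hm
  have hcast : (m : ℕ∞) = coveringNumber T ε := ENat.coe_toNat hne
  have hmgt : 2 ^ 2 ^ k < m := by
    have h2 : ((2 ^ 2 ^ k : ℕ) : ℕ∞) < (m : ℕ∞) := by
      rw [hcast]; exact_mod_cast hgt
    exact_mod_cast h2
  have hlog : (2 : ℝ) ^ k * Real.log 2 ≤ Real.log m := by
    have h3 : ((2 : ℝ) ^ (2 ^ k)) ≤ (m : ℝ) := by exact_mod_cast hmgt.le
    calc (2 : ℝ) ^ k * Real.log 2 = Real.log ((2:ℝ) ^ (2^k)) := by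
          rw [Real.log_pow]; push_cast; ring
      _ ≤ Real.log m := Real.log_le_log (by positivity) h3
  have hsq : Real.sqrt ((2:ℝ)^k) = Real.sqrt 2 ^ k := by
    rw [show (2:ℝ)^k = (Real.sqrt 2 ^ k)^2 by
      rw [← pow_mul, mul_comm k 2, pow_mul, Real.sq_sqrt (by norm_num)]]
    exact Real.sqrt_sq (by positivity)
  calc Real.sqrt 2 ^ k * Real.sqrt (Real.log 2)
      = Real.sqrt ((2:ℝ)^k * Real.log 2) := by
        rw [Real.sqrt_mul (by positivity), hsq]
    _ ≤ Real.sqrt (Real.log m) := Real.sqrt_le_sqrt hlog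

end TsumEpsk

open TsumEpsk

/-- With `ε_k := inf{ε > 0 : N(T, d, ε) ≤ 2^(2^k)}`, one has
`Σ_k 2^{k/2} ε_k ≤ (√2/((√2 - 1)√(ln 2))) ∫₀^∞ √(ln N(T, d, ε)) dε`. -/
theorem tsum_epsk_le_entropy_integral {X : Type*} [MetricSpace X] (T : Set X)
    (hfin : ∀ ε : ℝ, 0 < ε → coveringNumber T ε < ⊤) :
    (∑' k : ℕ, ENNReal.ofReal ((2 : ℝ) ^ ((k : ℝ) / 2) *
        sInf {ε : ℝ | 0 < ε ∧ coveringNumber T ε ≤ 2 ^ (2 ^ k)})) ≤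
      ENNReal.ofReal (Real.sqrt 2 / ((Real.sqrt 2 - 1) * Real.sqrt (Real.log 2))) *
        ∫⁻ ε in Set.Ioi (0 : ℝ),
          ENNReal.ofReal (Real.sqrt (Real.log ((coveringNumber T ε).toNat))) := by
  classical
  set s2 : ℝ := Real.sqrt 2 with hs2def
  set L : ℝ := Real.sqrt (Real.log 2) with hLdef
  set I : ℝ≥0∞ := ∫⁻ ε in Set.Ioi (0 : ℝ),
      ENNReal.ofReal (Real.sqrt (Real.log ((coveringNumber T ε).toNat))) with hIdef
  have hanti : Antitone (eps T) := eps_anti T hfin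
  have hepsnn : ∀ k, 0 ≤ eps T k := eps_nonneg T
  have hs2sq : s2 ^ 2 = 2 := Real.sq_sqrt (by norm_num)
  have hs2gt : 1 < s2 := by nlinarith [Real.sqrt_nonneg 2]
  have hs2pos : 0 < s2 := by linarith
  have hLpos : 0 < L := Real.sqrt_pos.2 (Real.log_pos (by norm_num))
  -- the per-n integral bound
  have hInt : ∀ n : ℕ,
      ENNReal.ofReal (L * ((∑ k ∈ Finset.range n, s2 ^ k * (eps T k - eps T (k+1)))
        + s2 ^ n * eps T n)) ≤ I := by
    intro n
    set lo : ℕ → ℝ := fun k => if k = n then 0 else eps T (k+1) with hlo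
    have hlonn : ∀ k, 0 ≤ lo k := by
      intro k; rw [hlo]; dsimp only; split <;> simp [hepsnn]
    have hlole : ∀ k ≤ n, lo k ≤ eps T k := by
      intro k hk; rw [hlo]; dsimp only; split
      · exact hepsnn k
      · exact hanti (Nat.le_succ k)
    set g : ℝ → ℝ≥0∞ := fun ε => ∑ k ∈ Finset.range (n+1),
        (Set.Ioo (lo k) (eps T k)).indicator (fun _ => ENNReal.ofReal (L * s2 ^ k)) ε
      with hg
    have hg_le : ∀ ε, g ε ≤ ENNReal.ofReal (Real.sqrt (Real.log ((coveringNumber T ε).toNat))) := by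
      intro ε
      by_cases hε : ∃ k ∈ Finset.range (n+1), ε ∈ Set.Ioo (lo k) (eps T k)
      · obtain ⟨k₀, hk₀mem, hk₀⟩ := hε
        have hk₀n : k₀ ≤ n := by simpa [Nat.lt_succ_iff] using hk₀mem
        have hsum : g ε = ENNReal.ofReal (L * s2 ^ k₀) := by
          rw [hg]; dsimp only
          rw [Finset.sum_eq_single_of_mem k₀ hk₀mem]
          · exact Set.indicator_of_mem hk₀ _
          · intro j hj hjne
            have hjn : j ≤ n := by simpa [Nat.lt_succ_iff] using hj
            apply Set.indicator_of_notMem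
            intro hεj
            rcases lt_or_gt_of_ne hjne with h | h
            · have hjne' : j ≠ n := by omega
              have h1 : eps T k₀ ≤ eps T (j+1) := hanti (by omega)
              have h2 : lo j < ε := hεj.1
              rw [hlo] at h2; simp only [if_neg hjne'] at h2
              have := hk₀.2
              linarith
            · have hk₀ne : k₀ ≠ n := by omega
              have h1 : eps T j ≤ eps T (k₀+1) := hanti (by omega)
              have h2 : lo k₀ < ε := hk₀.1
              rw [hlo] at h2; simp only [if_neg hk₀ne] at h2
              have := hεj.2
              linarith
        rw [hsum]
        apply ENNReal.ofReal_le_ofReal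
        have hpos : 0 < ε := lt_of_le_of_lt (hlonn k₀) hk₀.1
        have := key T hfin k₀ ε hpos hk₀.2
        rw [← hs2def, ← hLdef] at this
        linarith
      · push_neg at hε
        have : g ε = 0 := by
          rw [hg]; dsimp only
          exact Finset.sum_eq_zero fun k hk => Set.indicator_of_notMem (hε k hk) _
        simp [this]
    have hmono : ∫⁻ ε in Set.Ioi (0:ℝ), g ε ≤ I := by
      rw [hIdef]
      exact lintegral_mono hg_le
    have hgval : ∫⁻ ε in Set.Ioi (0:ℝ), g ε
        = ∑ k ∈ Finset.range (n+1),
            ENNReal.ofReal (L * s2 ^ k) * ENNReal.ofReal (eps T k - lo k) := by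
      rw [hg]; dsimp only
      rw [lintegral_finset_sum _ (fun k _ => (measurable_const.indicator measurableSet_Ioo))]
      refine Finset.sum_congr rfl fun k hk => ?_
      have hkn : k ≤ n := by simpa [Nat.lt_succ_iff] using hk
      rw [lintegral_indicator measurableSet_Ioo, Measure.restrict_restrict measurableSet_Ioo,
        setLIntegral_const]
      congr 1
      have hsub : Set.Ioo (lo k) (eps T k) ∩ Set.Ioi (0:ℝ) = Set.Ioo (lo k) (eps T k) := by
        apply Set.inter_eq_left.2
        intro x hx
        exact lt_of_le_of_lt (hlonn k) hx.1
      rw [hsub, Real.volume_Ioo]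
    have hsumval : ∑ k ∈ Finset.range (n+1),
          ENNReal.ofReal (L * s2 ^ k) * ENNReal.ofReal (eps T k - lo k)
        = ENNReal.ofReal (L * ((∑ k ∈ Finset.range n, s2 ^ k * (eps T k - eps T (k+1)))
            + s2 ^ n * eps T n)) := by
      have h1 : ∀ k ∈ Finset.range (n+1),
          ENNReal.ofReal (L * s2 ^ k) * ENNReal.ofReal (eps T k - lo k)
            = ENNReal.ofReal (L * s2 ^ k * (eps T k - lo k)) := by
        intro k hk
        rw [← ENNReal.ofReal_mul (mul_nonneg hLpos.le (pow_nonneg hs2pos.le k))]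
      rw [Finset.sum_congr rfl h1, ← ENNReal.ofReal_sum_of_nonneg]
      · congr 1
        rw [Finset.sum_range_succ]
        have h2 : ∀ k ∈ Finset.range n,
            L * s2 ^ k * (eps T k - lo k) = L * (s2 ^ k * (eps T k - eps T (k+1))) := by
          intro k hk
          have hkn : k ≠ n := by have := Finset.mem_range.1 hk; omega
          rw [hlo]; simp only [if_neg hkn]; ring
        have hlon : lo n = 0 := by simp [hlo]
        rw [Finset.sum_congr rfl h2, ← Finset.mul_sum, hlon]
        ring
      · intro k hk
        have hkn : k ≤ n := by simpa [Nat.lt_succ_iff] using hk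
        have h3 := hlole k hkn
        exact mul_nonneg (mul_nonneg hLpos.le (pow_nonneg hs2pos.le k)) (by linarith)
    calc ENNReal.ofReal (L * ((∑ k ∈ Finset.range n, s2 ^ k * (eps T k - eps T (k+1)))
            + s2 ^ n * eps T n)) = ∫⁻ ε in Set.Ioi (0:ℝ), g ε := by rw [hgval, hsumval]
      _ ≤ I := hmono
  -- the real telescoping inequality
  have hclaim : ∀ n : ℕ, (1 - 1/s2) * (∑ k ∈ Finset.range (n+1), s2 ^ k * eps T k)
      ≤ (∑ k ∈ Finset.range n, s2 ^ k * (eps T k - eps T (k+1))) + s2 ^ n * eps T n := by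
    intro n
    induction n with
    | zero =>
      simp only [Finset.range_one, Finset.sum_singleton, Finset.range_zero,
        Finset.sum_empty, pow_zero, one_mul, zero_add]
      have h1 : (0:ℝ) < 1/s2 := by positivity
      have h2 : 1/s2 ≤ 1 := by rw [div_le_one hs2pos]; linarith
      nlinarith [hepsnn 0]
    | succ n ih =>
      rw [Finset.sum_range_succ (f := fun k => s2 ^ k * eps T k),
        Finset.sum_range_succ (f := fun k => s2 ^ k * (eps T k - eps T (k+1)))]
      have hkey : (1 - 1/s2) * s2 ^ (n+1) = s2 ^ (n+1) - s2 ^ n := by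
        field_simp
        ring
      nlinarith [ih, hepsnn (n+1), mul_le_mul_of_nonneg_right (le_of_eq hkey) (hepsnn (n+1))]
  -- combine
  have heq : ∀ k : ℕ, sInf {ε : ℝ | 0 < ε ∧ coveringNumber T ε ≤ 2 ^ (2 ^ k)} = eps T k :=
    fun k => rfl
  have hrpow : ∀ k : ℕ, (2 : ℝ) ^ ((k : ℝ) / 2) = s2 ^ k := by
    intro k
    rw [hs2def, Real.sqrt_eq_rpow, ← Real.rpow_natCast ((2:ℝ) ^ ((1:ℝ)/2)) k,
      ← Real.rpow_mul (by norm_num)]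
    congr 1
    push_cast
    ring
  simp only [heq, hrpow]
  rw [ENNReal.tsum_eq_iSup_sum]
  refine iSup_le fun s => ?_
  obtain ⟨n, hn⟩ := s.exists_nat_subset_range
  have hsub : s ⊆ Finset.range (n+1) := hn.trans (Finset.range_subset_range.2 (Nat.le_succ n))
  calc (∑ k ∈ s, ENNReal.ofReal (s2 ^ k * eps T k))
      ≤ ∑ k ∈ Finset.range (n+1), ENNReal.ofReal (s2 ^ k * eps T k) :=
        Finset.sum_le_sum_of_subset hsub
    _ = ENNReal.ofReal (∑ k ∈ Finset.range (n+1), s2 ^ k * eps T k) :=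
        (ENNReal.ofReal_sum_of_nonneg (fun k _ => mul_nonneg (pow_nonneg hs2pos.le k) (hepsnn k))).symm
    _ ≤ ENNReal.ofReal (s2 / ((s2 - 1) * L)) * I := by
        set A : ℝ := ∑ k ∈ Finset.range (n+1), s2 ^ k * eps T k with hA
        have hAnn : 0 ≤ A := Finset.sum_nonneg fun k _ => mul_nonneg (pow_nonneg hs2pos.le k) (hepsnn k)
        have hs2ne : s2 ≠ 0 := ne_of_gt hs2pos
        have hs21ne : s2 - 1 ≠ 0 := by linarith
        have hLne : L ≠ 0 := ne_of_gt hLpos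
        have hCnn : (0:ℝ) ≤ s2 / ((s2 - 1) * L) :=
          div_nonneg hs2pos.le (mul_nonneg (by linarith) hLpos.le)
        have hCc : (s2 / ((s2 - 1) * L)) * (L * (1 - 1/s2)) = 1 := by
          field_simp
        have h1 : ENNReal.ofReal (L * (1 - 1/s2) * A) ≤ I := by
          refine le_trans (ENNReal.ofReal_le_ofReal ?_) (hInt n)
          have := hclaim n
          have hmul := mul_le_mul_of_nonneg_left this hLpos.le
          calc L * (1 - 1/s2) * A = L * ((1 - 1/s2) * A) := by ring
            _ ≤ L * ((∑ k ∈ Finset.range n, s2 ^ k * (eps T k - eps T (k+1)))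
                + s2 ^ n * eps T n) := hmul
        calc ENNReal.ofReal A
            = ENNReal.ofReal ((s2 / ((s2 - 1) * L)) * (L * (1 - 1/s2) * A)) := by
              rw [show (s2 / ((s2 - 1) * L)) * (L * (1 - 1/s2) * A)
                  = ((s2 / ((s2 - 1) * L)) * (L * (1 - 1/s2))) * A by ring, hCc, one_mul]
          _ = ENNReal.ofReal (s2 / ((s2 - 1) * L)) * ENNReal.ofReal (L * (1 - 1/s2) * A) := by
              rw [ENNReal.ofReal_mul hCnn]
          _ ≤ ENNReal.ofReal (s2 / ((s2 - 1) * L)) * I :=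
              mul_le_mul_right h1 _
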